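/- arXiv:2409.19644 — 2 statements merged into one kernel-verified Lean document; each statement's English description precedes it below -/
import Mathlib

section
/- Fix 0<q<1 and α>−1, and let T̃_k^{(α)} = Σ_{j=0}^{k} π̃_j^{(α)}. Then for all integers m≥0 and ℓ≥0: Σ_{k=0}^{m−1} (q^k;q^{−1})_ℓ · T̃_k^{(α)} (T̃_m^{(α)} − T̃_k^{(α)}) / (λ̃_k^{(α)} π̃_k^{(α)}) = ( q^{2ℓ+α+2} (q^m;q^{−1})_{ℓ+1} / ( (1−q^{ℓ+1})(1−q^{ℓ+α+2}) ) ) · T̃_m^{(α)}. -/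
open Finset

/-- The finite q-Pochhammer symbol `(a;q)_n = ∏_{k=0}^{n−1} (1 − a q^k)`. -/
noncomputable def qPochN (q a : ℝ) (n : ℕ) : ℝ :=
  ∏ k ∈ Finset.range n, (1 - a * q ^ k)

/-- The infinite q-Pochhammer symbol `(a;q)_∞ = ∏_{k=0}^∞ (1 − a q^k)`. -/
noncomputable def qPochInf (q a : ℝ) : ℝ :=
  ∏' k : ℕ, (1 - a * q ^ k)

/-- `γ(u,v;q) = (q^u;q)_∞/(q^{u+v};q)_∞`. -/
noncomputable def qgamma (q u v : ℝ) : ℝ :=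
  qPochInf q (q ^ u) / qPochInf q (q ^ (u + v))

/-- `r_n^{(α)} = (1−γ(n+1,α+1;q))/(1−γ(n,α+1;q))`. -/
noncomputable def rQL (q α : ℝ) (n : ℕ) : ℝ :=
  (1 - qgamma q ((n : ℝ) + 1) (α + 1)) / (1 - qgamma q (n : ℝ) (α + 1))

/-- The birth rates `λ̃_n^{(α)} = q^{−2n−α−1}(1−q^{n+α+1})/r_n^{(α)}`. -/
noncomputable def lamQL (q α : ℝ) (n : ℕ) : ℝ :=
  q ^ (-(2 * (n : ℝ)) - α - 1) * (1 - q ^ ((n : ℝ) + α + 1)) / rQL q α n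

/-- The death rates `μ̃_n^{(α)} = q^{−2n−α}(1−q^n) r_n^{(α)}`. -/
noncomputable def muQL (q α : ℝ) (n : ℕ) : ℝ :=
  q ^ (-(2 * (n : ℝ)) - α) * (1 - q ^ (n : ℝ)) * rQL q α n

/-- `π̃_n^{(α)} = ∏_{k=0}^{n−1} λ̃_k^{(α)}/μ̃_{k+1}^{(α)}` (with `π̃_0 = 1`). -/
noncomputable def piQL (q α : ℝ) (n : ℕ) : ℝ :=
  ∏ k ∈ Finset.range n, lamQL q α k / muQL q α (k + 1)

/-- `T̃_k^{(α)} = Σ_{j=0}^{k} π̃_j^{(α)}`. -/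
noncomputable def TQL (q α : ℝ) (k : ℕ) : ℝ :=
  ∑ j ∈ Finset.range (k + 1), piQL q α j

/-- The descending q-Pochhammer symbol `(q^k;q^{−1})_ℓ = ∏_{i=0}^{ℓ−1}(1−q^{k−i})`. -/
noncomputable def qPochDesc (q : ℝ) (k ℓ : ℕ) : ℝ :=
  ∏ i ∈ Finset.range ℓ, (1 - q ^ ((k : ℝ) - (i : ℝ)))


noncomputable def GQL (q α : ℝ) : ℝ := qPochInf q q / qPochInf q (q ^ (α + 1))
noncomputable def cQL (q α : ℝ) (n : ℕ) : ℝ := 1 - qgamma q (n : ℝ) (α + 1)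
noncomputable def WQL (q α : ℝ) (j : ℕ) : ℝ := qPochN q (q ^ (α+1)) (j+1) / qPochN q q j

section Aux
variable {q α : ℝ}
set_option maxHeartbeats 1000000 in
lemma summable_log_q (q : ℝ) (hq0 : 0 < q) (hq1 : q < 1) {a : ℝ} (ha0 : 0 < a) (ha1 : a < 1) :
    Summable (fun k : ℕ => Real.log (1 - a * q ^ k)) := by
  have hx : ∀ k : ℕ, 0 < a * q ^ k := fun k => mul_pos ha0 (pow_pos hq0 k)
  have hxle : ∀ k : ℕ, a * q ^ k ≤ a := fun k => by
    have h1 : q ^ k ≤ 1 := pow_le_one₀ hq0.le hq1.le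
    nlinarith
  have hpos : ∀ k : ℕ, 0 < 1 - a * q ^ k := fun k => by nlinarith [hxle k]
  rw [← summable_neg_iff]
  refine Summable.of_nonneg_of_le ?_ ?_ ((summable_geometric_of_lt_one hq0.le hq1).mul_left (a/(1-a)))
  · intro k
    simp only [neg_nonneg]
    exact Real.log_nonpos (by nlinarith [hpos k]) (by nlinarith [hx k])
  · intro k
    have h1 : -Real.log (1 - a * q ^ k) = Real.log (1 - a * q ^ k)⁻¹ := (Real.log_inv _).symm
    rw [h1]
    have h2 : Real.log (1 - a * q ^ k)⁻¹ ≤ (1 - a * q ^ k)⁻¹ - 1 :=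
      Real.log_le_sub_one_of_pos (inv_pos.2 (hpos k))
    have h3 : (1 - a * q ^ k)⁻¹ - 1 = (a * q ^ k) / (1 - a * q ^ k) := by
      field_simp [(hpos k).ne']
      ring
    have h4 : (a * q ^ k) / (1 - a * q ^ k) ≤ (a * q ^ k) / (1 - a) := by
      apply div_le_div_of_nonneg_left (hx k).le (by linarith) (by nlinarith [hxle k])
    calc Real.log (1 - a * q ^ k)⁻¹ ≤ (a * q ^ k)/(1 - a * q^k) := by rw [← h3]; exact h2
      _ ≤ (a * q ^ k)/(1-a) := h4
      _ = (a/(1-a)) * q ^ k := by ring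
lemma hasProd_qPochInf (q : ℝ) (hq0 : 0 < q) (hq1 : q < 1) {a : ℝ} (ha0 : 0 < a) (ha1 : a < 1) :
    HasProd (fun k : ℕ => 1 - a * q ^ k)
      (Real.exp (∑' k : ℕ, Real.log (1 - a * q ^ k))) := by
  have hpos : ∀ k : ℕ, 0 < 1 - a * q ^ k := fun k => by
    have h1 : q ^ k ≤ 1 := pow_le_one₀ hq0.le hq1.le
    nlinarith [pow_pos hq0 k]
  have h := ((summable_log_q q hq0 hq1 ha0 ha1).hasSum).rexp
  have he : (Real.exp ∘ fun k : ℕ => Real.log (1 - a * q ^ k)) = fun k : ℕ => 1 - a * q ^ k :=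
    funext fun k => Real.exp_log (hpos k)
  rwa [he] at h

lemma qPochInf_eq_exp (q : ℝ) (hq0 : 0 < q) (hq1 : q < 1) {a : ℝ} (ha0 : 0 < a) (ha1 : a < 1) :
    qPochInf q a = Real.exp (∑' k : ℕ, Real.log (1 - a * q ^ k)) :=
  (hasProd_qPochInf q hq0 hq1 ha0 ha1).tprod_eq

lemma qPochInf_pos (q : ℝ) (hq0 : 0 < q) (hq1 : q < 1) {a : ℝ} (ha0 : 0 < a) (ha1 : a < 1) :
    0 < qPochInf q a := by
  rw [qPochInf_eq_exp q hq0 hq1 ha0 ha1]; exact Real.exp_pos _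

lemma multipliable_qPochInf (q : ℝ) (hq0 : 0 < q) (hq1 : q < 1) {a : ℝ} (ha0 : 0 < a)
    (ha1 : a < 1) : Multipliable (fun k : ℕ => 1 - a * q ^ k) :=
  ⟨_, hasProd_qPochInf q hq0 hq1 ha0 ha1⟩

lemma qPochInf_lt (q : ℝ) (hq0 : 0 < q) (hq1 : q < 1) {a b : ℝ} (hb0 : 0 < b) (hba : b < a)
    (ha1 : a < 1) : qPochInf q a < qPochInf q b := by
  have ha0 : 0 < a := hb0.trans hba
  have hb1 : b < 1 := hba.trans ha1
  rw [qPochInf_eq_exp q hq0 hq1 ha0 ha1, qPochInf_eq_exp q hq0 hq1 hb0 hb1]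
  apply Real.exp_lt_exp.2
  have hposa : ∀ k : ℕ, 0 < 1 - a * q ^ k := fun k => by
    have h1 : q ^ k ≤ 1 := pow_le_one₀ hq0.le hq1.le
    nlinarith [pow_pos hq0 k]
  refine Summable.tsum_lt_tsum (i := 0) (fun k => ?_) ?_ (summable_log_q q hq0 hq1 ha0 ha1)
    (summable_log_q q hq0 hq1 hb0 hb1)
  · apply Real.log_le_log (hposa k)
    nlinarith [pow_pos hq0 k]
  · apply Real.log_lt_log (hposa 0)
    simp only [pow_zero, mul_one]
    linarith

set_option maxHeartbeats 800000 in
lemma qPochInf_peel (q : ℝ) (hq0 : 0 < q) (hq1 : q < 1) {a : ℝ} (ha0 : 0 < a) (ha1 : a ≤ 1) :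
    qPochInf q a = (1 - a) * qPochInf q (a * q) := by
  unfold qPochInf
  have hm : Multipliable (fun n : ℕ => 1 - a * q ^ (n + 1)) := by
    have := multipliable_qPochInf q hq0 hq1 (a := a * q) (mul_pos ha0 hq0)
      (by nlinarith)
    refine this.congr fun n => ?_
    rw [pow_succ']
    ring
  rw [tprod_eq_zero_mul' hm]
  simp only [pow_zero, mul_one]
  congr 1
  apply tprod_congr
  intro n
  rw [pow_succ']
  ring
variable {q α : ℝ}

lemma qPochN_pos (hq0 : 0 < q) (hq1 : q < 1) {a : ℝ} (ha0 : 0 ≤ a) (ha1 : a < 1) (n : ℕ) :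
    0 < qPochN q a n := by
  apply Finset.prod_pos
  intro k _
  have h1 : q ^ k ≤ 1 := pow_le_one₀ hq0.le hq1.le
  nlinarith [pow_pos hq0 k, mul_le_one₀ ha1.le (pow_pos hq0 k).le h1]

lemma qPochInf_shift (hq0 : 0 < q) (hq1 : q < 1) {u : ℝ} (hu : 0 < u) (n : ℕ) :
    qPochInf q (q ^ u) = qPochN q (q ^ u) n * qPochInf q (q ^ (u + n)) := by
  induction n with
  | zero => simp [qPochN]
  | succ n ih =>
      have hpos : (0:ℝ) < q ^ (u + (n:ℝ)) := Real.rpow_pos_of_pos hq0 _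
      have hlt : q ^ (u + (n:ℝ)) < 1 :=
        Real.rpow_lt_one hq0.le hq1 (by positivity)
      have hpeel := qPochInf_peel q hq0 hq1 hpos hlt.le
      have h1 : q ^ (u + (n:ℝ)) * q = q ^ (u + ((n:ℕ)+1 : ℕ)) := by
        rw [← Real.rpow_add_one hq0.ne' (u + (n:ℝ))]
        congr 1
        push_cast
        ring
      have h2 : q ^ (u + (n:ℝ)) = q ^ u * q ^ n := by
        rw [Real.rpow_add hq0, Real.rpow_natCast]
      rw [ih, hpeel, h1, h2]
      simp only [qPochN, Finset.prod_range_succ]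
      ring

lemma qgamma_eq (hq0 : 0 < q) (hq1 : q < 1) (hα : -1 < α) (n : ℕ) :
    qgamma q (n : ℝ) (α + 1)
      = GQL q α * (1 - q ^ n) * qPochN q (q ^ (α + 1)) n / qPochN q q n := by
  have hα1 : (0:ℝ) < α + 1 := by linarith
  have ht0 : (0:ℝ) < q ^ (α+1) := Real.rpow_pos_of_pos hq0 _
  have ht1 : q ^ (α+1) < 1 := Real.rpow_lt_one hq0.le hq1 hα1
  have hEα : qPochInf q (q ^ (α+1)) = qPochN q (q ^ (α+1)) n * qPochInf q (q ^ ((α+1) + n)) :=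
    qPochInf_shift hq0 hq1 hα1 n
  have hE1 : qPochInf q q = qPochN q q n * qPochInf q (q ^ ((1:ℝ) + n)) := by
    have := qPochInf_shift hq0 hq1 (u := 1) one_pos n
    rwa [Real.rpow_one] at this
  have hEn : qPochInf q (q ^ (n:ℝ)) = (1 - q ^ n) * qPochInf q (q ^ ((1:ℝ) + n)) := by
    rcases Nat.eq_zero_or_pos n with h | h
    · subst h
      have := qPochInf_peel q hq0 hq1 (a := q ^ ((0:ℕ):ℝ)) (by positivity)
        (by rw [Nat.cast_zero, Real.rpow_zero])
      rw [this]
      rw [Nat.cast_zero, Real.rpow_zero]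
      norm_num
    · have hn0 : (0:ℝ) < (n:ℝ) := by exact_mod_cast h
      have hlt : q ^ (n:ℝ) < 1 := Real.rpow_lt_one hq0.le hq1 hn0
      have := qPochInf_peel q hq0 hq1 (a := q ^ (n:ℝ)) (Real.rpow_pos_of_pos hq0 _) hlt.le
      rw [this, ← Real.rpow_add_one hq0.ne' (n:ℝ), Real.rpow_natCast]
      have : ((n:ℝ) + 1) = (1:ℝ) + (n:ℝ) := by ring
      rw [this]
  have hEtail_pos : 0 < qPochInf q (q ^ ((α+1) + n)) :=
    qPochInf_pos q hq0 hq1 (Real.rpow_pos_of_pos hq0 _)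
      (Real.rpow_lt_one hq0.le hq1 (by positivity))
  have hQn : 0 < qPochN q q n := qPochN_pos hq0 hq1 hq0.le hq1 n
  have hPn : 0 < qPochN q (q ^ (α+1)) n := qPochN_pos hq0 hq1 ht0.le ht1 n
  have hexp : (n:ℝ) + (α + 1) = (α + 1) + n := by ring
  unfold qgamma GQL
  rw [hexp, hEα, hEn, hE1]
  field_simp
variable {q α : ℝ}

lemma qPochN_succ (q a : ℝ) (n : ℕ) :
    qPochN q a (n + 1) = qPochN q a n * (1 - a * q ^ n) := Finset.prod_range_succ _ _

lemma t_pos (hq0 : 0 < q) : (0:ℝ) < q ^ (α + 1) := Real.rpow_pos_of_pos hq0 _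
lemma t_lt_one (hq0 : 0 < q) (hq1 : q < 1) (hα : -1 < α) : q ^ (α + 1) < 1 :=
  Real.rpow_lt_one hq0.le hq1 (by linarith)

lemma GQL_pos (hq0 : 0 < q) (hq1 : q < 1) (hα : -1 < α) : 0 < GQL q α := by
  have h1 : 0 < qPochInf q q := qPochInf_pos q hq0 hq1 hq0 hq1
  have h2 : 0 < qPochInf q (q ^ (α + 1)) :=
    qPochInf_pos q hq0 hq1 (t_pos hq0) (t_lt_one hq0 hq1 hα)
  exact div_pos h1 h2

lemma c_pos (hq0 : 0 < q) (hq1 : q < 1) (hα : -1 < α) (n : ℕ) : 0 < cQL q α n := by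
  rcases Nat.eq_zero_or_pos n with h | h
  · subst h
    unfold cQL
    rw [qgamma_eq hq0 hq1 hα 0]
    norm_num
  · unfold cQL qgamma
    have hn0 : (0:ℝ) < (n:ℝ) := by exact_mod_cast h
    have h1 : qPochInf q (q ^ (n:ℝ)) < qPochInf q (q ^ ((n:ℝ) + (α + 1))) := by
      apply qPochInf_lt q hq0 hq1 (Real.rpow_pos_of_pos hq0 _)
      · exact Real.rpow_lt_rpow_of_exponent_gt hq0 hq1 (by linarith)
      · exact Real.rpow_lt_one hq0.le hq1 hn0
    have h2 : 0 < qPochInf q (q ^ ((n:ℝ) + (α + 1))) :=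
      qPochInf_pos q hq0 hq1 (Real.rpow_pos_of_pos hq0 _)
        (Real.rpow_lt_one hq0.le hq1 (by linarith))
    have := (div_lt_one h2).2 h1
    linarith

lemma c_zero (hq0 : 0 < q) (hq1 : q < 1) (hα : -1 < α) : cQL q α 0 = 1 := by
  unfold cQL
  rw [qgamma_eq hq0 hq1 hα 0]
  norm_num

lemma rQL_eq (n : ℕ) : rQL q α n = cQL q α (n + 1) / cQL q α n := by
  unfold rQL cQL
  push_cast
  rfl

lemma lammu_ratio (hq0 : 0 < q) (hq1 : q < 1) (hα : -1 < α) (n : ℕ) :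
    lamQL q α n / muQL q α (n + 1)
      = q * (1 - q ^ (α+1) * q ^ n) * cQL q α n / ((1 - q ^ (n+1)) * cQL q α (n + 2)) := by
  have hc0 := (c_pos hq0 hq1 hα n).ne'
  have hc1 := (c_pos hq0 hq1 hα (n+1)).ne'
  have hc2 := (c_pos hq0 hq1 hα (n+2)).ne'
  have hqn1 : q ^ (n+1) < 1 := pow_lt_one₀ hq0.le hq1 (Nat.succ_ne_zero n)
  have hB : (0:ℝ) < q ^ (-(2*((n:ℝ)+1)) - α) := Real.rpow_pos_of_pos hq0 _
  have hsplit : q ^ (-(2*(n:ℝ)) - α - 1) = q ^ (-(2*((n:ℝ)+1)) - α) * q := by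
    rw [← Real.rpow_add_one hq0.ne']
    congr 1
    ring
  have hexp1 : q ^ ((n:ℝ) + α + 1) = q ^ (α+1) * q ^ n := by
    rw [← Real.rpow_natCast q n, ← Real.rpow_add hq0]
    congr 1
    ring
  have hexp2 : q ^ (((n+1:ℕ)):ℝ) = q ^ (n+1) := Real.rpow_natCast q (n+1)
  unfold lamQL muQL
  rw [rQL_eq n, rQL_eq (n+1)]
  push_cast
  rw [hsplit, hexp1]
  rw [show ((n:ℝ) + 1) = ((n+1:ℕ):ℝ) by push_cast; ring, Real.rpow_natCast]
  have h1q : (1:ℝ) - q ^ (n+1) ≠ 0 := by linarith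
  rw [show n + 1 + 1 = n + 2 from rfl]
  field_simp

lemma pi_eq (hq0 : 0 < q) (hq1 : q < 1) (hα : -1 < α) (n : ℕ) :
    piQL q α n = q ^ n * qPochN q (q ^ (α+1)) n / qPochN q q n * cQL q α 1
      / (cQL q α n * cQL q α (n + 1)) := by
  induction n with
  | zero =>
      have hc1 := (c_pos hq0 hq1 hα 1).ne'
      simp [piQL, qPochN, c_zero hq0 hq1 hα]
      exact (div_self hc1).symm
  | succ n ih =>
      have hc0 := (c_pos hq0 hq1 hα n).ne'
      have hc1 := (c_pos hq0 hq1 hα (n+1)).ne'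
      have hc2 := (c_pos hq0 hq1 hα (n+2)).ne'
      have hqn1 : (1:ℝ) - q ^ (n+1) ≠ 0 := by
        have : q ^ (n+1) < 1 := pow_lt_one₀ hq0.le hq1 (Nat.succ_ne_zero n)
        linarith
      have hQn : (qPochN q q n) ≠ 0 := (qPochN_pos hq0 hq1 hq0.le hq1 n).ne'
      have hQn1 : (qPochN q q (n+1)) ≠ 0 := (qPochN_pos hq0 hq1 hq0.le hq1 (n+1)).ne'
      have hPoch : qPochN q q (n+1) = qPochN q q n * (1 - q ^ (n+1)) := by
        rw [qPochN_succ]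
        congr 2
        rw [pow_succ']
      unfold piQL
      rw [Finset.prod_range_succ, ← piQL, ih, lammu_ratio hq0 hq1 hα n]
      rw [qPochN_succ q (q ^ (α+1)) n, hPoch]
      rw [show n + 1 + 1 = n + 2 from rfl]
      field_simp
      ring

lemma g_diff (hq0 : 0 < q) (hq1 : q < 1) (hα : -1 < α) (n : ℕ) :
    cQL q α n - cQL q α (n + 1)
      = GQL q α * (1 - q ^ (α+1)) * q ^ n * qPochN q (q ^ (α+1)) n / qPochN q q n := by
  have hQn : (qPochN q q n) ≠ 0 := (qPochN_pos hq0 hq1 hq0.le hq1 n).ne'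
  have hqn1 : (1:ℝ) - q ^ (n+1) ≠ 0 := by
    have : q ^ (n+1) < 1 := pow_lt_one₀ hq0.le hq1 (Nat.succ_ne_zero n)
    linarith
  have hPoch : qPochN q q (n+1) = qPochN q q n * (1 - q ^ (n+1)) := by
    rw [qPochN_succ]; congr 2; rw [pow_succ']
  unfold cQL
  rw [qgamma_eq hq0 hq1 hα n, show (((n+1:ℕ)):ℝ) = ((n+1:ℕ):ℝ) from rfl,
    qgamma_eq hq0 hq1 hα (n+1), qPochN_succ q (q ^ (α+1)) n, hPoch]
  field_simp
  ring

lemma g_succ (hq0 : 0 < q) (hq1 : q < 1) (hα : -1 < α) (n : ℕ) :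
    1 - cQL q α (n + 1) = GQL q α * qPochN q (q ^ (α+1)) (n+1) / qPochN q q n := by
  have hQn : (qPochN q q n) ≠ 0 := (qPochN_pos hq0 hq1 hq0.le hq1 n).ne'
  have hqn1 : (1:ℝ) - q ^ (n+1) ≠ 0 := by
    have : q ^ (n+1) < 1 := pow_lt_one₀ hq0.le hq1 (Nat.succ_ne_zero n)
    linarith
  have hPoch : qPochN q q (n+1) = qPochN q q n * (1 - q ^ (n+1)) := by
    rw [qPochN_succ]; congr 2; rw [pow_succ']
  unfold cQL
  rw [qgamma_eq hq0 hq1 hα (n+1), hPoch]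
  field_simp
  ring

lemma T_eq (hq0 : 0 < q) (hq1 : q < 1) (hα : -1 < α) (k : ℕ) :
    TQL q α k = (cQL q α 1 / (GQL q α * (1 - q ^ (α+1))))
      * (1 / cQL q α (k + 1) - 1) := by
  have hG := (GQL_pos hq0 hq1 hα).ne'
  have ht1 : (1:ℝ) - q ^ (α+1) ≠ 0 := by
    have := t_lt_one hq0 hq1 hα
    linarith
  induction k with
  | zero =>
      have hc1 := (c_pos hq0 hq1 hα 1).ne'
      have hg1 : 1 - cQL q α 1 = GQL q α * (1 - q ^ (α+1)) := by
        have := g_succ hq0 hq1 hα 0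
        rw [this]
        simp [qPochN]
      have : TQL q α 0 = 1 := by simp [TQL, piQL]
      have h2 : 1/cQL q α 1 - 1 = (1 - cQL q α 1)/cQL q α 1 := by field_simp
      rw [this, h2, hg1]
      field_simp
  | succ k ih =>
      have hc1 := (c_pos hq0 hq1 hα (k+1)).ne'
      have hc2 := (c_pos hq0 hq1 hα (k+2)).ne'
      have hQn1 : (qPochN q q (k+1)) ≠ 0 := (qPochN_pos hq0 hq1 hq0.le hq1 (k+1)).ne'
      have hTs : TQL q α (k+1) = TQL q α k + piQL q α (k+1) := Finset.sum_range_succ _ _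
      have hd := g_diff hq0 hq1 hα (k+1)
      rw [show (k+1) + 1 = k + 2 from rfl] at hd
      have key : piQL q α (k+1)
          = (cQL q α 1 / (GQL q α * (1 - q ^ (α+1))))
            * (1 / cQL q α (k + 2) - 1 / cQL q α (k + 1)) := by
        rw [pi_eq hq0 hq1 hα (k+1), show k + 1 + 1 = k + 2 from rfl]
        rw [div_sub_div _ _ hc2 hc1]
        rw [show (1 : ℝ) * cQL q α (k+1) - cQL q α (k+2) * 1
            = cQL q α (k+1) - cQL q α (k+2) by ring, hd]
        field_simp
      rw [hTs, ih, key]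
      ring
variable {q α : ℝ}

lemma T_W (hq0 : 0 < q) (hq1 : q < 1) (hα : -1 < α) (k : ℕ) :
    TQL q α k = cQL q α 1 * WQL q α k / ((1 - q ^ (α+1)) * cQL q α (k+1)) := by
  have hG := (GQL_pos hq0 hq1 hα).ne'
  have ht1 : (1:ℝ) - q ^ (α+1) ≠ 0 := by have := t_lt_one hq0 hq1 hα; linarith
  have hc1 := (c_pos hq0 hq1 hα (k+1)).ne'
  have hQn : (qPochN q q k) ≠ 0 := (qPochN_pos hq0 hq1 hq0.le hq1 k).ne'
  rw [T_eq hq0 hq1 hα k]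
  have h2 : 1/cQL q α (k+1) - 1 = (1 - cQL q α (k+1))/cQL q α (k+1) := by field_simp
  rw [h2, g_succ hq0 hq1 hα k]
  unfold WQL
  field_simp

lemma lam_eq (hq0 : 0 < q) (hq1 : q < 1) (hα : -1 < α) (k : ℕ) :
    lamQL q α k = (q ^ (α+1) * q ^ k * q ^ k)⁻¹ * (1 - q ^ (α+1) * q ^ k) * cQL q α k
      / cQL q α (k+1) := by
  have hc0 := (c_pos hq0 hq1 hα k).ne'
  have hc1 := (c_pos hq0 hq1 hα (k+1)).ne'
  have hA : q ^ (-(2*(k:ℝ)) - α - 1) = (q ^ (α+1) * q ^ k * q ^ k)⁻¹ := by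
    rw [show (-(2*(k:ℝ)) - α - 1) = -((α+1) + (k:ℝ) + (k:ℝ)) by ring, Real.rpow_neg hq0.le,
      Real.rpow_add hq0, Real.rpow_add hq0, Real.rpow_natCast]
  have hexp1 : q ^ ((k:ℝ) + α + 1) = q ^ (α+1) * q ^ k := by
    rw [← Real.rpow_natCast q k, ← Real.rpow_add hq0]
    congr 1
    ring
  unfold lamQL
  rw [rQL_eq k, hA, hexp1]
  field_simp


lemma Tdiff (hq0 : 0 < q) (hq1 : q < 1) (hα : -1 < α) (k m : ℕ) :
    TQL q α m - TQL q α k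
      = cQL q α 1 * (WQL q α m - WQL q α k)
        / ((1 - q ^ (α+1)) * cQL q α (k+1) * cQL q α (m+1)) := by
  have ht1 : (1:ℝ) - q ^ (α+1) ≠ 0 := by have := t_lt_one hq0 hq1 hα; linarith
  have hck := (c_pos hq0 hq1 hα (k+1)).ne'
  have hcm := (c_pos hq0 hq1 hα (m+1)).ne'
  have hgk : cQL q α (k+1) = 1 - GQL q α * WQL q α k := by
    have := g_succ hq0 hq1 hα k
    unfold WQL
    rw [← mul_div_assoc]
    linarith
  have hgm : cQL q α (m+1) = 1 - GQL q α * WQL q α m := by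
    have := g_succ hq0 hq1 hα m
    unfold WQL
    rw [← mul_div_assoc]
    linarith
  have hGk : (1:ℝ) - GQL q α * WQL q α k ≠ 0 := hgk ▸ hck
  have hGm : (1:ℝ) - GQL q α * WQL q α m ≠ 0 := hgm ▸ hcm
  rw [T_W hq0 hq1 hα k, T_W hq0 hq1 hα m, hgk, hgm]
  rw [div_sub_div _ _ (mul_ne_zero ht1 hGm) (mul_ne_zero ht1 hGk),
    div_eq_div_iff (mul_ne_zero (mul_ne_zero ht1 hGm) (mul_ne_zero ht1 hGk))
      (mul_ne_zero (mul_ne_zero ht1 hGk) hGm)]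
  ring

lemma lampi (hq0 : 0 < q) (hq1 : q < 1) (hα : -1 < α) (k : ℕ) :
    lamQL q α k * piQL q α k
      = (1 - q ^ (α+1) * q ^ k) * qPochN q (q ^ (α+1)) k * cQL q α 1
        / ((q ^ (α+1) * q ^ k) * qPochN q q k * (cQL q α (k+1))^2) := by
  have ht0 : (0:ℝ) < q ^ (α+1) := Real.rpow_pos_of_pos hq0 _
  have hc0 := (c_pos hq0 hq1 hα k).ne'
  have hck := (c_pos hq0 hq1 hα (k+1)).ne'
  have hQk : (qPochN q q k) ≠ 0 := (qPochN_pos hq0 hq1 hq0.le hq1 k).ne'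
  have hqk : (q:ℝ) ^ k ≠ 0 := (pow_pos hq0 k).ne'
  rw [lam_eq hq0 hq1 hα k, pi_eq hq0 hq1 hα k]
  field_simp

set_option maxHeartbeats 1000000 in
lemma core_eq (hq0 : 0 < q) (hq1 : q < 1) (hα : -1 < α) (k m : ℕ) :
    (TQL q α k * (TQL q α m - TQL q α k)) / (lamQL q α k * piQL q α k)
      = cQL q α 1 * q ^ (α+1) / ((1 - q ^ (α+1))^2 * cQL q α (m+1))
        * (q ^ k * (WQL q α m - WQL q α k)) := by
  have ht0 : (0:ℝ) < q ^ (α+1) := Real.rpow_pos_of_pos hq0 _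
  have ht1 : (1:ℝ) - q ^ (α+1) ≠ 0 := by have := t_lt_one hq0 hq1 hα; linarith
  have hck := (c_pos hq0 hq1 hα (k+1)).ne'
  have hcm := (c_pos hq0 hq1 hα (m+1)).ne'
  have hc1 := (c_pos hq0 hq1 hα 1).ne'
  have hQk : (qPochN q q k) ≠ 0 := (qPochN_pos hq0 hq1 hq0.le hq1 k).ne'
  have hPk : (qPochN q (q ^ (α+1)) k) ≠ 0 :=
    (qPochN_pos hq0 hq1 ht0.le (t_lt_one hq0 hq1 hα) k).ne'
  have htk : (1:ℝ) - q ^ (α+1) * q ^ k ≠ 0 := by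
    have h1 : q ^ k ≤ 1 := pow_le_one₀ hq0.le hq1.le
    have h2 := t_lt_one hq0 hq1 hα
    nlinarith [pow_pos hq0 k]
  have hqk : (q:ℝ) ^ k ≠ 0 := (pow_pos hq0 k).ne'
  have hWk : WQL q α k = qPochN q (q ^ (α+1)) k * (1 - q ^ (α+1) * q ^ k) / qPochN q q k := by
    unfold WQL
    rw [qPochN_succ]
  rw [Tdiff hq0 hq1 hα k m, T_W hq0 hq1 hα k, lampi hq0 hq1 hα k, hWk]
  field_simp
variable {q α : ℝ}

lemma desc_zero (hq0 : 0 < q) (ℓ : ℕ) : qPochDesc q 0 (ℓ + 1) = 0 := by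
  unfold qPochDesc
  apply Finset.prod_eq_zero (Finset.mem_range.2 (Nat.succ_pos ℓ))
  norm_num

lemma descR1 (q : ℝ) (m ℓ : ℕ) :
    qPochDesc q m (ℓ + 1) = qPochDesc q m ℓ * (1 - q ^ ((m:ℝ) - (ℓ:ℝ))) :=
  Finset.prod_range_succ _ _

lemma descR2 (q : ℝ) (m ℓ : ℕ) :
    qPochDesc q (m + 1) (ℓ + 1) = (1 - q ^ (m + 1)) * qPochDesc q m ℓ := by
  unfold qPochDesc
  rw [Finset.prod_range_succ']
  have h0 : (1:ℝ) - q ^ (((m+1:ℕ)):ℝ) = 1 - q ^ (m+1) := by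
    rw [Real.rpow_natCast]
  have h1 : ∀ i : ℕ, ((m+1:ℕ):ℝ) - ((i+1:ℕ):ℝ) = (m:ℝ) - (i:ℝ) := by
    intro i; push_cast; ring
  rw [mul_comm]
  congr 1
  · rw [show (((m+1:ℕ)):ℝ) - ((0:ℕ):ℝ) = ((m+1:ℕ):ℝ) by push_cast; ring, Real.rpow_natCast]
  · apply Finset.prod_congr rfl
    intro i _
    rw [h1 i]

lemma hrp (hq0 : 0 < q) (m ℓ : ℕ) : q ^ ((m:ℝ) - (ℓ:ℝ)) = q ^ m / q ^ ℓ := by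
  rw [← Real.rpow_natCast q m, ← Real.rpow_natCast q ℓ, ← Real.rpow_sub hq0]

lemma sumI1 (hq0 : 0 < q) (hq1 : q < 1) (ℓ : ℕ) : ∀ m : ℕ,
    ∑ k ∈ Finset.range m, q ^ k * qPochDesc q k ℓ
      = q ^ ℓ * qPochDesc q m (ℓ + 1) / (1 - q ^ (ℓ + 1)) := by
  have hql : (1:ℝ) - q ^ (ℓ+1) ≠ 0 := by
    have : q ^ (ℓ+1) < 1 := pow_lt_one₀ hq0.le hq1 (Nat.succ_ne_zero ℓ)
    linarith
  have hqℓ : (q:ℝ) ^ ℓ ≠ 0 := (pow_pos hq0 ℓ).ne'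
  intro m
  induction m with
  | zero => simp [desc_zero hq0 ℓ]
  | succ m ih =>
      rw [Finset.sum_range_succ, ih, descR2 q m ℓ, descR1 q m ℓ, hrp hq0 m ℓ]
      field_simp
      ring

lemma Wsucc (hq0 : 0 < q) (hq1 : q < 1) (hα : -1 < α) (m : ℕ) :
    WQL q α (m+1) = WQL q α m * (1 - q ^ (α+1) * q ^ (m+1)) / (1 - q ^ (m+1)) := by
  have hQm : (qPochN q q m) ≠ 0 := (qPochN_pos hq0 hq1 hq0.le hq1 m).ne'
  have hqm1 : (1:ℝ) - q ^ (m+1) ≠ 0 := by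
    have : q ^ (m+1) < 1 := pow_lt_one₀ hq0.le hq1 (Nat.succ_ne_zero m)
    linarith
  unfold WQL
  rw [qPochN_succ q (q ^ (α+1)) (m+1), qPochN_succ q q m, pow_succ']
  field_simp

lemma sumI2 (hq0 : 0 < q) (hq1 : q < 1) (hα : -1 < α) (ℓ : ℕ) : ∀ m : ℕ,
    ∑ k ∈ Finset.range m, q ^ k * qPochDesc q k ℓ * WQL q α k
      = q ^ ℓ * qPochDesc q m (ℓ + 1) * WQL q α m / (1 - q ^ (α+1) * q ^ (ℓ + 1)) := by
  have ht0 : (0:ℝ) < q ^ (α+1) := Real.rpow_pos_of_pos hq0 _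
  have htl : (1:ℝ) - q ^ (α+1) * q ^ (ℓ+1) ≠ 0 := by
    have h1 : q ^ (ℓ+1) < 1 := pow_lt_one₀ hq0.le hq1 (Nat.succ_ne_zero ℓ)
    have h2 := t_lt_one hq0 hq1 hα
    nlinarith [pow_pos hq0 (ℓ+1)]
  have hqℓ : (q:ℝ) ^ ℓ ≠ 0 := (pow_pos hq0 ℓ).ne'
  intro m
  induction m with
  | zero => simp [desc_zero hq0 ℓ]
  | succ m ih =>
      have hqm1 : (1:ℝ) - q ^ (m+1) ≠ 0 := by
        have : q ^ (m+1) < 1 := pow_lt_one₀ hq0.le hq1 (Nat.succ_ne_zero m)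
        linarith
      rw [Finset.sum_range_succ, ih, descR2 q m ℓ, descR1 q m ℓ, hrp hq0 m ℓ,
        Wsucc hq0 hq1 hα m]
      field_simp
      ring

end Aux

set_option maxHeartbeats 1000000 in
/-- Lemma 6.13, equation (6.38): for all `m, ℓ ≥ 0`,
`Σ_{k=0}^{m−1} (q^k;q^{−1})_ℓ T̃_k (T̃_m − T̃_k)/(λ̃_k π̃_k)
  = (q^{2ℓ+α+2} (q^m;q^{−1})_{ℓ+1} / ((1−q^{ℓ+1})(1−q^{ℓ+α+2}))) T̃_m`. -/
theorem modified_qLaguerre_T_sum_finite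
    (q α : ℝ) (hq0 : 0 < q) (hq1 : q < 1) (hα : -1 < α) (m ℓ : ℕ) :
    ∑ k ∈ Finset.range m,
        qPochDesc q k ℓ * (TQL q α k * (TQL q α m - TQL q α k))
          / (lamQL q α k * piQL q α k)
      = q ^ (2 * (ℓ : ℝ) + α + 2) * qPochDesc q m (ℓ + 1)
          / ((1 - q ^ ((ℓ : ℝ) + 1)) * (1 - q ^ ((ℓ : ℝ) + α + 2)))
        * TQL q α m := by
  have ht0 : (0:ℝ) < q ^ (α+1) := Real.rpow_pos_of_pos hq0 _
  have ht1 : (1:ℝ) - q ^ (α+1) ≠ 0 := by have := t_lt_one hq0 hq1 hα; linarith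
  have hcm := (c_pos hq0 hq1 hα (m+1)).ne'
  have hql : (1:ℝ) - q ^ (ℓ+1) ≠ 0 := by
    have : q ^ (ℓ+1) < 1 := pow_lt_one₀ hq0.le hq1 (Nat.succ_ne_zero ℓ)
    linarith
  have htl : (1:ℝ) - q ^ (α+1) * q ^ (ℓ+1) ≠ 0 := by
    have h1 : q ^ (ℓ+1) < 1 := pow_lt_one₀ hq0.le hq1 (Nat.succ_ne_zero ℓ)
    have h2 := t_lt_one hq0 hq1 hα
    nlinarith [pow_pos hq0 (ℓ+1)]
  have hqℓ : (q:ℝ) ^ ℓ ≠ 0 := (pow_pos hq0 ℓ).ne'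
  set C : ℝ := cQL q α 1 * q ^ (α+1) / ((1 - q ^ (α+1))^2 * cQL q α (m+1)) with hC
  have hsum : ∑ k ∈ Finset.range m,
      qPochDesc q k ℓ * (TQL q α k * (TQL q α m - TQL q α k)) / (lamQL q α k * piQL q α k)
      = (C * WQL q α m) * (∑ k ∈ Finset.range m, q ^ k * qPochDesc q k ℓ)
        - C * (∑ k ∈ Finset.range m, q ^ k * qPochDesc q k ℓ * WQL q α k) := by
    rw [Finset.mul_sum, Finset.mul_sum, ← Finset.sum_sub_distrib]
    apply Finset.sum_congr rfl
    intro k _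
    rw [mul_div_assoc, core_eq hq0 hq1 hα k m]
    ring
  rw [hsum, sumI1 hq0 hq1 ℓ m, sumI2 hq0 hq1 hα ℓ m, T_W hq0 hq1 hα m]
  have hexpA : q ^ (2 * (ℓ:ℝ) + α + 2) = q ^ (α+1) * q ^ (2*ℓ+1) := by
    rw [← Real.rpow_natCast q (2*ℓ+1), ← Real.rpow_add hq0]
    congr 1
    push_cast
    ring
  have hexpB : q ^ ((ℓ:ℝ) + 1) = q ^ (ℓ+1) := by
    rw [← Real.rpow_natCast q (ℓ+1)]
    congr 1
    push_cast
    ring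
  have hexpC : q ^ ((ℓ:ℝ) + α + 2) = q ^ (α+1) * q ^ (ℓ+1) := by
    rw [← Real.rpow_natCast q (ℓ+1), ← Real.rpow_add hq0]
    congr 1
    push_cast
    ring
  rw [hexpA, hexpB, hexpC, hC]
  have h2l : (q:ℝ) ^ (2*ℓ+1) = q ^ ℓ * q ^ ℓ * q := by
    rw [show 2*ℓ+1 = ℓ + ℓ + 1 by ring, pow_add, pow_add, pow_one]
  rw [h2l]
  field_simp
  ring
end

section
/- Fix 0<q<1 and α>−1, and let T̃_k^{(α)} = Σ_{j=0}^{k} π̃_j^{(α)}. Then for every integer ℓ≥0 the series Σ_{k=0}^{∞} (q^k;q^{−1})_ℓ · T̃_k^{(α)} / (λ̃_k^{(α)} π̃_k^{(α)}) converges and equals q^{2ℓ+α+2} / ( (1−q^{ℓ+1})(1−q^{ℓ+α+2}) ). -/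
open Finset

open Finset Filter Real

set_option maxHeartbeats 1000000
set_option linter.unusedSectionVars false

namespace QLagAux

variable {q : ℝ}

/-- `1 - q^x` with real exponent. -/
noncomputable def qE (q x : ℝ) : ℝ := 1 - q ^ x

/-- `(q^x; q)_n` as a finite product with real exponents. -/
noncomputable def qpoch (q x : ℝ) (n : ℕ) : ℝ := ∏ i ∈ Finset.range n, qE q (x + i)

lemma qE_pos (hq0 : 0 < q) (hq1 : q < 1) {x : ℝ} (hx : 0 < x) : 0 < qE q x := by
  have h := Real.rpow_lt_one hq0.le hq1 hx
  simp only [qE]; linarith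

lemma qE_lt_one (hq0 : 0 < q) {x : ℝ} : qE q x < 1 := by
  have := Real.rpow_pos_of_pos hq0 x
  simp only [qE]; linarith

lemma qE_ne (hq0 : 0 < q) (hq1 : q < 1) {x : ℝ} (hx : 0 < x) : qE q x ≠ 0 :=
  (qE_pos hq0 hq1 hx).ne'

lemma qpoch_zero (x : ℝ) : qpoch q x 0 = 1 := by simp [qpoch]

lemma qpoch_succ (x : ℝ) (n : ℕ) : qpoch q x (n + 1) = qpoch q x n * qE q (x + n) := by
  simp [qpoch, Finset.prod_range_succ]

lemma qpoch_succ' (x : ℝ) (n : ℕ) : qpoch q x (n + 1) = qE q x * qpoch q (x + 1) n := by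
  rw [qpoch, Finset.prod_range_succ']
  rw [mul_comm]
  congr 1
  · simp
  · refine Finset.prod_congr rfl fun i _ => ?_
    push_cast
    ring_nf

lemma qpoch_add (x : ℝ) (m n : ℕ) :
    qpoch q x (m + n) = qpoch q x m * qpoch q (x + m) n := by
  rw [qpoch, Finset.prod_range_add]
  congr 1
  refine Finset.prod_congr rfl fun i _ => ?_
  push_cast
  ring_nf

lemma qpoch_pos (hq0 : 0 < q) (hq1 : q < 1) {x : ℝ} (hx : 0 < x) (n : ℕ) :
    0 < qpoch q x n := by
  refine Finset.prod_pos fun i _ => qE_pos hq0 hq1 ?_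
  positivity

lemma qpoch_ne (hq0 : 0 < q) (hq1 : q < 1) {x : ℝ} (hx : 0 < x) (n : ℕ) :
    qpoch q x n ≠ 0 := (qpoch_pos hq0 hq1 hx n).ne'

section PochInf

variable (hq0 : 0 < q) (hq1 : q < 1)
include hq0 hq1

lemma fact_pos {a : ℝ} (ha0 : 0 ≤ a) (ha1 : a < 1) (k : ℕ) : 0 < 1 - a * q ^ k := by
  have h1 : a * q ^ k ≤ a * 1 :=
    mul_le_mul_of_nonneg_left (pow_le_one₀ hq0.le hq1.le) ha0
  linarith

lemma summable_log_fact {a : ℝ} (ha0 : 0 ≤ a) (ha1 : a < 1) :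
    Summable fun k : ℕ => Real.log (1 - a * q ^ k) := by
  rw [← summable_neg_iff]
  have key : ∀ k : ℕ, -Real.log (1 - a * q ^ k) ≤ (1 - a)⁻¹ * a * q ^ k := by
    intro k
    have hx : a * q ^ k ≤ a := by
      calc a * q ^ k ≤ a * 1 := mul_le_mul_of_nonneg_left (pow_le_one₀ hq0.le hq1.le) ha0
      _ = a := mul_one a
    have hy : 0 < 1 - a * q ^ k := fact_pos hq0 hq1 ha0 ha1 k
    have h1a : 0 < 1 - a := by linarith
    have hle : 1 - a ≤ 1 - a * q ^ k := by linarith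
    have hlog : Real.log ((1 - a * q ^ k)⁻¹) ≤ (1 - a * q ^ k)⁻¹ - 1 :=
      Real.log_le_sub_one_of_pos (by positivity)
    rw [Real.log_inv] at hlog
    have h2 : (1 - a * q ^ k)⁻¹ - 1 = (a * q ^ k) / (1 - a * q ^ k) := by
      field_simp
      ring
    rw [h2] at hlog
    refine hlog.trans ?_
    have h4 : (1 - a)⁻¹ * a * q ^ k = (a * q ^ k) / (1 - a) := by
      field_simp
    rw [h4]
    gcongr
  refine Summable.of_nonneg_of_le (fun k => ?_) key ?_
  · have hy : 0 < 1 - a * q ^ k := fact_pos hq0 hq1 ha0 ha1 k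
    have : Real.log (1 - a * q ^ k) ≤ 0 := by
      refine Real.log_nonpos (by linarith) ?_
      nlinarith [pow_nonneg hq0.le k, mul_nonneg ha0 (pow_nonneg hq0.le k)]
    linarith
  · simpa [mul_assoc] using (summable_geometric_of_lt_one hq0.le hq1).mul_left ((1 - a)⁻¹ * a)

lemma multipliable_fact {a : ℝ} (ha0 : 0 ≤ a) (ha1 : a < 1) :
    Multipliable fun k : ℕ => 1 - a * q ^ k :=
  Real.multipliable_of_summable_log (f := fun (k : ℕ) => 1 - a * q ^ k)
    (fun k => fact_pos hq0 hq1 ha0 ha1 k)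
    (summable_log_fact hq0 hq1 ha0 ha1)

lemma qPochInf_eq_exp {a : ℝ} (ha0 : 0 ≤ a) (ha1 : a < 1) :
    qPochInf q a = Real.exp (∑' k : ℕ, Real.log (1 - a * q ^ k)) := by
  have h : Real.exp (∑' k : ℕ, Real.log (1 - a * q ^ k)) = ∏' k : ℕ, (1 - a * q ^ k) :=
    Real.rexp_tsum_eq_tprod (f := fun (k : ℕ) => 1 - a * q ^ k)
    (fun k => fact_pos hq0 hq1 ha0 ha1 k)
    (summable_log_fact hq0 hq1 ha0 ha1)
  rw [qPochInf, ← h]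

lemma qPochInf_pos {a : ℝ} (ha0 : 0 ≤ a) (ha1 : a < 1) : 0 < qPochInf q a := by
  rw [qPochInf_eq_exp hq0 hq1 ha0 ha1]; exact Real.exp_pos _

lemma qPochInf_mono {a b : ℝ} (ha0 : 0 ≤ a) (hab : a ≤ b) (hb1 : b < 1) :
    qPochInf q b ≤ qPochInf q a := by
  have ha1 : a < 1 := lt_of_le_of_lt hab hb1
  rw [qPochInf_eq_exp hq0 hq1 ha0 ha1, qPochInf_eq_exp hq0 hq1 (ha0.trans hab) hb1]
  refine Real.exp_le_exp.2 ?_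
  refine Summable.tsum_le_tsum (fun k => ?_) (summable_log_fact hq0 hq1 (ha0.trans hab) hb1)
    (summable_log_fact hq0 hq1 ha0 ha1)
  refine Real.log_le_log (fact_pos hq0 hq1 (ha0.trans hab) hb1 k) ?_
  have := mul_le_mul_of_nonneg_right hab (pow_nonneg hq0.le k)
  linarith

lemma qPochInf_shift {a : ℝ} (ha0 : 0 ≤ a) (ha1 : a < 1) :
    qPochInf q a = (1 - a) * qPochInf q (a * q) := by
  have haq0 : 0 ≤ a * q := mul_nonneg ha0 hq0.le
  have haq1 : a * q < 1 := by
    have h5 : a * q ≤ a * 1 := mul_le_mul_of_nonneg_left hq1.le ha0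
    linarith
  have hm : Multipliable (fun n : ℕ => 1 - a * q ^ (n + 1)) := by
    refine (multipliable_fact hq0 hq1 haq0 haq1).congr fun k => ?_
    rw [pow_succ]
    ring
  rw [qPochInf, tprod_eq_zero_mul' hm]
  congr 1
  · simp
  · rw [qPochInf]
    refine tprod_congr fun k => ?_
    rw [pow_succ]
    ring

lemma qPochInf_one_eq_zero : qPochInf q (1 : ℝ) = (0 : ℝ) := by
  have h : HasProd (fun k : ℕ => 1 - 1 * q ^ k) 0 := by
    rw [HasProd]
    have hev : (fun s : Finset ℕ => ∏ i ∈ s, (1 - 1 * q ^ i)) =ᶠ[atTop]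
        (fun _ => (0 : ℝ)) := by
      filter_upwards [Filter.eventually_ge_atTop ({0} : Finset ℕ)] with s hs
      refine Finset.prod_eq_zero (hs (Finset.mem_singleton_self 0)) (by simp)
    exact Tendsto.congr' hev.symm tendsto_const_nhds
  exact h.tprod_eq

end PochInf

section Gamma

variable {α : ℝ} (hq0 : 0 < q) (hq1 : q < 1) (hα : -1 < α)
include hq0 hq1 hα

lemma rpow_lt_one' {x : ℝ} (hx : 0 < x) : q ^ x < 1 := Real.rpow_lt_one hq0.le hq1 hx

lemma Ppos {x : ℝ} (hx : 0 < x) : 0 < qPochInf q (q ^ x) :=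
  qPochInf_pos hq0 hq1 (Real.rpow_nonneg hq0.le x) (rpow_lt_one' hq0 hq1 hα hx)

lemma Pshift {x : ℝ} (hx : 0 < x) :
    qPochInf q (q ^ x) = qE q x * qPochInf q (q ^ (x + 1)) := by
  have h := qPochInf_shift hq0 hq1 (Real.rpow_nonneg hq0.le x) (rpow_lt_one' hq0 hq1 hα hx)
  rw [h, qE]
  congr 2
  rw [Real.rpow_add hq0, Real.rpow_one]

lemma Pshiftn {x : ℝ} (hx : 0 < x) (n : ℕ) :
    qPochInf q (q ^ x) = qpoch q x n * qPochInf q (q ^ (x + n)) := by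
  induction n with
  | zero => simp [qpoch_zero]
  | succ n ih =>
    rw [ih, qpoch_succ, Pshift hq0 hq1 hα (by positivity : (0:ℝ) < x + n)]
    push_cast
    ring_nf

lemma gamma_pos {u : ℝ} (hu : 0 < u) : 0 < qgamma q u (α + 1) := by
  rw [qgamma]
  exact div_pos (Ppos hq0 hq1 hα hu) (Ppos hq0 hq1 hα (by linarith))

lemma gamma_lt_one {u : ℝ} (hu : 0 < u) : qgamma q u (α + 1) < 1 := by
  rw [qgamma, div_lt_one (Ppos hq0 hq1 hα (by linarith : (0:ℝ) < u + (α + 1)))]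
  have h1 : qPochInf q (q ^ u) = qE q u * qPochInf q (q ^ (u + 1)) := Pshift hq0 hq1 hα hu
  have h2 : qPochInf q (q ^ (u + (α + 1)))
      = qE q (u + (α + 1)) * qPochInf q (q ^ (u + (α + 1) + 1)) :=
    Pshift hq0 hq1 hα (by linarith)
  rw [h1, h2]
  have hmono : qPochInf q (q ^ (u + 1)) ≤ qPochInf q (q ^ (u + (α + 1) + 1)) := by
    refine qPochInf_mono hq0 hq1 (Real.rpow_nonneg hq0.le _) ?_
      (rpow_lt_one' hq0 hq1 hα (by linarith))
    exact Real.rpow_le_rpow_of_exponent_ge hq0 hq1.le (by linarith)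
  have hE : qE q u < qE q (u + (α + 1)) := by
    have := Real.rpow_lt_rpow_of_exponent_gt hq0 hq1 (by linarith : u < u + (α + 1))
    simp only [qE]; linarith
  have hP1 : 0 < qPochInf q (q ^ (u + 1)) := Ppos hq0 hq1 hα (by linarith)
  have hP2 : 0 < qPochInf q (q ^ (u + (α + 1) + 1)) := Ppos hq0 hq1 hα (by linarith)
  have hEu : 0 < qE q u := qE_pos hq0 hq1 hu
  calc qE q u * qPochInf q (q ^ (u + 1))
      ≤ qE q u * qPochInf q (q ^ (u + (α + 1) + 1)) := by
        exact mul_le_mul_of_nonneg_left hmono hEu.le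
    _ < qE q (u + (α + 1)) * qPochInf q (q ^ (u + (α + 1) + 1)) := by
        exact mul_lt_mul_of_pos_right hE hP2
lemma gamma_ne_one {u : ℝ} (hu : 0 < u) : 1 - qgamma q u (α + 1) ≠ 0 := by
  have := gamma_lt_one hq0 hq1 hα hu
  intro h; linarith [sub_eq_zero.mp h]

lemma gamma_rec {u : ℝ} (hu : 0 < u) :
    qgamma q (u + 1) (α + 1) = qgamma q u (α + 1) * (qE q (u + α + 1) / qE q u) := by
  have h1 : qPochInf q (q ^ u) = qE q u * qPochInf q (q ^ (u + 1)) := Pshift hq0 hq1 hα hu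
  have h2 : qPochInf q (q ^ (u + (α + 1)))
      = qE q (u + α + 1) * qPochInf q (q ^ (u + 1 + (α + 1))) := by
    have := Pshift hq0 hq1 hα (by linarith : (0:ℝ) < u + (α + 1))
    rw [this]
    ring_nf
  rw [qgamma, qgamma, h1, h2]
  have hP1 : 0 < qPochInf q (q ^ (u + 1)) := Ppos hq0 hq1 hα (by linarith)
  have hP2 : 0 < qPochInf q (q ^ (u + 1 + (α + 1))) := Ppos hq0 hq1 hα (by linarith)
  have hEu : qE q u ≠ 0 := qE_ne hq0 hq1 hu
  have hE2 : qE q (u + α + 1) ≠ 0 := qE_ne hq0 hq1 (by linarith)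
  field_simp

lemma gamma_zero' : qgamma q 0 (α + 1) = 0 := by
  rw [qgamma, Real.rpow_zero, qPochInf_one_eq_zero hq0 hq1, zero_div]

end Gamma

noncomputable def qDD (q α : ℝ) (k : ℕ) : ℝ := qpoch q (α + 2) k / qpoch q 1 k

noncomputable def qCC (q α : ℝ) (k : ℕ) : ℝ := qpoch q (α + 1) k / qpoch q 1 k

noncomputable def gg (q α : ℝ) (n : ℕ) : ℝ := 1 - qgamma q (n : ℝ) (α + 1)

section Chain

variable {α : ℝ} (hq0 : 0 < q) (hq1 : q < 1) (hα : -1 < α)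
include hq0 hq1 hα

lemma gg_zero : gg q α 0 = 1 := by
  simp [gg, gamma_zero' hq0 hq1 hα]

lemma gg_pos (n : ℕ) : 0 < gg q α n := by
  cases n with
  | zero => rw [gg_zero hq0 hq1 hα]; norm_num
  | succ n =>
    have h := gamma_lt_one hq0 hq1 hα (by positivity : (0:ℝ) < ((n+1 : ℕ) : ℝ))
    rw [gg]; linarith

lemma gg_ne (n : ℕ) : gg q α n ≠ 0 := (gg_pos hq0 hq1 hα n).ne'

lemma gamma1_pos : 0 < qgamma q 1 (α + 1) := gamma_pos hq0 hq1 hα one_pos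

lemma gamma1_ne : qgamma q 1 (α + 1) ≠ 0 := (gamma1_pos hq0 hq1 hα).ne'

lemma qDD_pos (k : ℕ) : 0 < qDD q α k :=
  div_pos (qpoch_pos hq0 hq1 (by linarith) k) (qpoch_pos hq0 hq1 one_pos k)

lemma qCC_pos (k : ℕ) : 0 < qCC q α k :=
  div_pos (qpoch_pos hq0 hq1 (by linarith) k) (qpoch_pos hq0 hq1 one_pos k)

lemma qDD_succ (k : ℕ) :
    qDD q α (k + 1) = qDD q α k * (qE q (α + 2 + k) / qE q (1 + k)) := by
  rw [qDD, qDD, qpoch_succ, qpoch_succ]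
  field_simp

lemma qCC_succ (k : ℕ) :
    qCC q α (k + 1) = qCC q α k * (qE q (α + 1 + k) / qE q (1 + k)) := by
  rw [qCC, qCC, qpoch_succ, qpoch_succ]
  field_simp

lemma gamma_eq_D (k : ℕ) :
    qgamma q ((k : ℝ) + 1) (α + 1) = qgamma q 1 (α + 1) * qDD q α k := by
  induction k with
  | zero => simp [qDD, qpoch_zero]
  | succ k ih =>
    have hrec := gamma_rec hq0 hq1 hα (by positivity : (0:ℝ) < (k : ℝ) + 1)
    push_cast
    rw [hrec, ih, qDD_succ hq0 hq1 hα]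
    ring_nf

lemma subB (k : ℕ) :
    qCC q α (k + 1) * qE q ((k : ℝ) + 1) = qE q (α + 1) * qDD q α k := by
  rw [qCC, qDD]
  have h1 : qpoch q (α + 1) (k + 1) = qE q (α + 1) * qpoch q (α + 2) k := by
    rw [qpoch_succ']; ring_nf
  have h2 : qpoch q 1 (k + 1) = qpoch q 1 k * qE q (1 + k) := qpoch_succ 1 k
  rw [h1, h2]
  have hp1 : qpoch q 1 k ≠ 0 := qpoch_ne hq0 hq1 one_pos k
  have hE : qE q (1 + (k:ℝ)) ≠ 0 := qE_ne hq0 hq1 (by positivity)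
  field_simp
  ring_nf

lemma subC (k : ℕ) :
    qDD q α k * qE q (α + 1) = qCC q α k * qE q ((k : ℝ) + α + 1) := by
  rw [qCC, qDD]
  have h1 : qE q (α + 1) * qpoch q (α + 2) k = qpoch q (α + 1) (k + 1) := by
    rw [qpoch_succ']; ring_nf
  have h2 : qpoch q (α + 1) (k + 1) = qpoch q (α + 1) k * qE q (α + 1 + k) :=
    qpoch_succ _ k
  have hp1 : qpoch q 1 k ≠ 0 := qpoch_ne hq0 hq1 one_pos k
  field_simp
  rw [mul_comm (qpoch q (α+2) k) (qE q (α+1)), h1, h2]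
  ring_nf

lemma hsplit (k : ℕ) :
    qE q (α + 2 + k) = qE q (1 + k) + q ^ ((k:ℝ) + 1) * qE q (α + 1) := by
  simp only [qE]
  have h : q ^ (α + 2 + (k:ℝ)) = q ^ ((k:ℝ) + 1) * q ^ (α + 1) := by
    rw [← Real.rpow_add hq0]; ring_nf
  have h2 : q ^ (1 + (k:ℝ)) = q ^ ((k:ℝ) + 1) := by ring_nf
  rw [h, h2]; ring

lemma key_diff (k : ℕ) :
    gg q α (k + 1) - gg q α (k + 2) =
      qgamma q 1 (α + 1) * q ^ ((k:ℝ) + 1) * qCC q α (k + 1) := by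
  have hg1 : gg q α (k + 1) = 1 - qgamma q 1 (α + 1) * qDD q α k := by
    rw [gg, show (((k+1):ℕ):ℝ) = (k:ℝ) + 1 by push_cast; ring, gamma_eq_D hq0 hq1 hα]
  have hg2 : gg q α (k + 2) = 1 - qgamma q 1 (α + 1) * qDD q α (k + 1) := by
    rw [gg, show (((k+2):ℕ):ℝ) = ((k+1 : ℕ):ℝ) + 1 by push_cast; ring,
      gamma_eq_D hq0 hq1 hα]
  rw [hg1, hg2, qDD_succ hq0 hq1 hα]
  have hE1 : qE q (1 + (k:ℝ)) ≠ 0 := qE_ne hq0 hq1 (by positivity)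
  have hCB := subB hq0 hq1 hα k
  have hs := hsplit hq0 hq1 hα (α := α) k
  have hE1' : qE q ((k:ℝ) + 1) = qE q (1 + (k:ℝ)) := by ring_nf
  have hCB' : qCC q α (k + 1) * qE q (1 + (k:ℝ)) = qE q (α + 1) * qDD q α k := by
    rw [← hE1']; exact hCB
  field_simp
  rw [hs]
  linear_combination (-(qgamma q 1 (α + 1)) * q ^ ((k:ℝ) + 1)) * hCB'

lemma r_eq (n : ℕ) : rQL q α n = gg q α (n + 1) / gg q α n := by
  rw [rQL, gg, gg]
  norm_num

lemma lam_eq (n : ℕ) :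
    lamQL q α n = q ^ (-(2 * (n:ℝ)) - α - 1) * qE q ((n:ℝ) + α + 1) * gg q α n
      / gg q α (n + 1) := by
  rw [lamQL, r_eq hq0 hq1 hα, div_div_eq_mul_div, qE]

lemma mu_eq (n : ℕ) :
    muQL q α (n + 1) = q ^ (-(2 * ((n:ℝ) + 1)) - α) * qE q ((n:ℝ) + 1) * gg q α (n + 2)
      / gg q α (n + 1) := by
  rw [muQL, r_eq hq0 hq1 hα, qE]
  push_cast
  rw [show n + 1 + 1 = n + 2 from rfl]
  ring

lemma lam_div_mu (n : ℕ) :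
    lamQL q α n / muQL q α (n + 1)
      = q * (qE q ((n:ℝ) + α + 1) * gg q α n) / (qE q ((n:ℝ) + 1) * gg q α (n + 2)) := by
  rw [lam_eq hq0 hq1 hα, mu_eq hq0 hq1 hα]
  have hAB : q ^ (-(2 * (n:ℝ)) - α - 1) = q * q ^ (-(2 * ((n:ℝ) + 1)) - α) := by
    rw [show -(2 * (n:ℝ)) - α - 1 = 1 + (-(2 * ((n:ℝ) + 1)) - α) by ring,
      Real.rpow_add hq0, Real.rpow_one]
  rw [hAB]
  have hB : q ^ (-(2 * ((n:ℝ) + 1)) - α) ≠ 0 := (Real.rpow_pos_of_pos hq0 _).ne'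
  have hE1 : qE q ((n:ℝ) + 1) ≠ 0 := qE_ne hq0 hq1 (by positivity)
  have hE2 : qE q ((n:ℝ) + α + 1) ≠ 0 := qE_ne hq0 hq1 (by linarith)
  have hg1 : gg q α (n + 1) ≠ 0 := gg_ne hq0 hq1 hα _
  have hg2 : gg q α (n + 2) ≠ 0 := gg_ne hq0 hq1 hα _
  have hg0 : gg q α n ≠ 0 := gg_ne hq0 hq1 hα _
  field_simp

lemma pi_eq (n : ℕ) :
    piQL q α n = q ^ n * qCC q α n * gg q α 1 / (gg q α n * gg q α (n + 1)) := by
  induction n with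
  | zero =>
    rw [piQL, gg_zero hq0 hq1 hα]
    simp [qCC, qpoch_zero, gg_ne hq0 hq1 hα 1]
  | succ n ih =>
    have hstep : piQL q α (n + 1) = piQL q α n * (lamQL q α n / muQL q α (n + 1)) := by
      rw [piQL, piQL, Finset.prod_range_succ]
    rw [hstep, ih, lam_div_mu hq0 hq1 hα, qCC_succ hq0 hq1 hα]
    have hE1 : qE q ((n:ℝ) + 1) ≠ 0 := qE_ne hq0 hq1 (by positivity)
    have hE1' : qE q (1 + (n:ℝ)) = qE q ((n:ℝ) + 1) := by ring_nf
    have hE2' : qE q (α + 1 + (n:ℝ)) = qE q ((n:ℝ) + α + 1) := by ring_nf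
    have hg1 : gg q α (n + 1) ≠ 0 := gg_ne hq0 hq1 hα _
    have hg2 : gg q α (n + 2) ≠ 0 := gg_ne hq0 hq1 hα _
    have hg0 : gg q α n ≠ 0 := gg_ne hq0 hq1 hα _
    rw [show n + 1 + 1 = n + 2 from rfl, hE1', hE2', pow_succ]
    field_simp

lemma T_eq (k : ℕ) :
    TQL q α k = gg q α 1 * (1 - gg q α (k + 1)) / (qgamma q 1 (α + 1) * gg q α (k + 1)) := by
  induction k with
  | zero =>
    have h0 : TQL q α 0 = 1 := by
      rw [TQL]
      simp [piQL]
    have h1 : (1:ℝ) - qgamma q 1 (α + 1) ≠ 0 := by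
      have := gg_ne hq0 hq1 hα 1
      rwa [gg, Nat.cast_one] at this
    rw [h0, gg]
    norm_num
    rw [mul_comm, div_self (mul_ne_zero (gamma1_ne hq0 hq1 hα) h1)]
  | succ k ih =>
    have hstep : TQL q α (k + 1) = TQL q α k + piQL q α (k + 1) := by
      rw [TQL, TQL, Finset.sum_range_succ]
    rw [hstep, ih, pi_eq hq0 hq1 hα]
    have hkd := key_diff hq0 hq1 hα k
    have hg1 : gg q α (k + 1) ≠ 0 := gg_ne hq0 hq1 hα _
    have hg2 : gg q α (k + 2) ≠ 0 := gg_ne hq0 hq1 hα _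
    have hγ : qgamma q 1 (α + 1) ≠ 0 := gamma1_ne hq0 hq1 hα
    have hnp : (q:ℝ) ^ (k + 1 : ℕ) = q ^ ((k:ℝ) + 1) := by
      rw [← Real.rpow_natCast q (k + 1)]
      push_cast
      ring_nf
    rw [show k + 1 + 1 = k + 2 from rfl, hnp]
    field_simp
    linear_combination
      (-(gg q α 1)) * hkd

lemma lampi_eq (k : ℕ) :
    lamQL q α k * piQL q α k
      = (q ^ (-(2 * (k:ℝ)) - α - 1) * q ^ k) * qE q ((k:ℝ) + α + 1) * qCC q α k
          * gg q α 1 / (gg q α (k + 1)) ^ 2 := by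
  rw [lam_eq hq0 hq1 hα, pi_eq hq0 hq1 hα]
  have hg1 : gg q α (k + 1) ≠ 0 := gg_ne hq0 hq1 hα _
  have hg0 : gg q α k ≠ 0 := gg_ne hq0 hq1 hα _
  field_simp

lemma lampi_pos (k : ℕ) : lamQL q α k * piQL q α k ≠ 0 := by
  rw [lampi_eq hq0 hq1 hα]
  have hA : (0:ℝ) < q ^ (-(2 * (k:ℝ)) - α - 1) := Real.rpow_pos_of_pos hq0 _
  have hE : 0 < qE q ((k:ℝ) + α + 1) := qE_pos hq0 hq1 (by linarith)
  have hC : 0 < qCC q α k := qCC_pos hq0 hq1 hα k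
  have hg1 : 0 < gg q α 1 := gg_pos hq0 hq1 hα 1
  have hgk : 0 < gg q α (k + 1) := gg_pos hq0 hq1 hα _
  positivity

lemma Tdiv (k : ℕ) :
    TQL q α k / (lamQL q α k * piQL q α k)
      = q ^ ((k:ℝ) + α + 1) * gg q α (k + 1) / qE q (α + 1) := by
  rw [T_eq hq0 hq1 hα, lampi_eq hq0 hq1 hα]
  have h1mg : 1 - gg q α (k + 1) = qgamma q 1 (α + 1) * qDD q α k := by
    rw [gg, show (((k+1):ℕ):ℝ) = (k:ℝ) + 1 by push_cast; ring, gamma_eq_D hq0 hq1 hα]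
    ring
  rw [h1mg]
  have hsubC := subC hq0 hq1 hα k
  have hApow : q ^ (-(2 * (k:ℝ)) - α - 1) * q ^ k * q ^ ((k:ℝ) + α + 1) = 1 := by
    rw [← Real.rpow_natCast q k, ← Real.rpow_add hq0, ← Real.rpow_add hq0,
      show -(2 * (k:ℝ)) - α - 1 + (k:ℝ) + ((k:ℝ) + α + 1) = 0 by ring, Real.rpow_zero]
  have hγ : qgamma q 1 (α + 1) ≠ 0 := gamma1_ne hq0 hq1 hα
  have hg1 : gg q α 1 ≠ 0 := gg_ne hq0 hq1 hα _
  have hgk : gg q α (k + 1) ≠ 0 := gg_ne hq0 hq1 hα _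
  have hEα : qE q (α + 1) ≠ 0 := qE_ne hq0 hq1 (by linarith)
  have hE1 : qE q ((k:ℝ) + α + 1) ≠ 0 := qE_ne hq0 hq1 (by linarith)
  have hC : qCC q α k ≠ 0 := (qCC_pos hq0 hq1 hα k).ne'
  have hA : q ^ (-(2 * (k:ℝ)) - α - 1) ≠ 0 := (Real.rpow_pos_of_pos hq0 _).ne'
  have hP : (q : ℝ) ^ k ≠ 0 := (pow_pos hq0 k).ne'
  field_simp
  linear_combination
    hsubC - (qCC q α k * qE q ((k:ℝ) + α + 1)) * hApow

lemma term_eq (ℓ k : ℕ) :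
    qPochDesc q k ℓ * TQL q α k / (lamQL q α k * piQL q α k)
      = qPochDesc q k ℓ * (q ^ ((k:ℝ) + α + 1) * gg q α (k + 1)) / qE q (α + 1) := by
  rw [mul_div_assoc, Tdiv hq0 hq1 hα]
  ring

lemma qPochDesc_lt {k ℓ : ℕ} (hk : k < ℓ) : qPochDesc q k ℓ = 0 := by
  rw [qPochDesc]
  refine Finset.prod_eq_zero (Finset.mem_range.2 hk) ?_
  simp

lemma qPochDesc_shift (ℓ m : ℕ) : qPochDesc q (ℓ + m) ℓ = qpoch q ((m:ℝ) + 1) ℓ := by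
  rw [qPochDesc, qpoch, ← Finset.prod_range_reflect]
  refine Finset.prod_congr rfl fun i hi => ?_
  rw [Finset.mem_range] at hi
  rw [qE]
  have h2 : ℓ - 1 - i + (i + 1) = ℓ := by omega
  have h3 := congrArg (fun n : ℕ => (n:ℝ)) h2
  push_cast at h3
  have h4 : ((ℓ - 1 - i : ℕ):ℝ) = (ℓ:ℝ) - i - 1 := by linarith
  rw [h4]
  push_cast
  ring_nf

lemma qPochDesc_nonneg (ℓ k : ℕ) : 0 ≤ qPochDesc q k ℓ := by
  rcases lt_or_ge k ℓ with h | h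
  · rw [qPochDesc_lt hq0 hq1 hα h]
  · obtain ⟨m, rfl⟩ := Nat.exists_eq_add_of_le h
    rw [qPochDesc_shift hq0 hq1 hα]
    exact (qpoch_pos hq0 hq1 (by positivity) ℓ).le

lemma hggD (n : ℕ) : gg q α (n + 1) = 1 - qgamma q 1 (α + 1) * qDD q α n := by
  rw [gg, show (((n+1):ℕ):ℝ) = (n:ℝ) + 1 by push_cast; ring, gamma_eq_D hq0 hq1 hα]

lemma Usum (ℓ N : ℕ) :
    ∑ m ∈ Finset.range (N + 1), q ^ (ℓ + m) * qpoch q ((m:ℝ) + 1) ℓ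
      = q ^ ℓ * qpoch q ((N:ℝ) + 1) (ℓ + 1) / qE q ((ℓ:ℝ) + 1) := by
  have hEl : qE q ((ℓ:ℝ) + 1) ≠ 0 := qE_ne hq0 hq1 (by positivity)
  induction N with
  | zero =>
    rw [Finset.sum_range_one]
    norm_num
    rw [qpoch_succ]
    have harg : qE q (1 + (ℓ:ℝ)) = qE q ((ℓ:ℝ) + 1) := by ring_nf
    rw [harg]
    field_simp
  | succ N ih =>
    rw [Finset.sum_range_succ, ih]
    push_cast
    have h2 : qpoch q ((N:ℝ) + 1) (ℓ + 1) = qE q ((N:ℝ) + 1) * qpoch q ((N:ℝ) + 1 + 1) ℓ :=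
      qpoch_succ' _ _
    have h1 : qpoch q ((N:ℝ) + 1 + 1) (ℓ + 1)
        = qpoch q ((N:ℝ) + 1 + 1) ℓ * qE q ((N:ℝ) + 1 + 1 + ℓ) := qpoch_succ _ _
    have h3 : qE q ((N:ℝ) + 1 + 1 + (ℓ:ℝ))
        = qE q ((N:ℝ) + 1) + q ^ ((N:ℝ) + 1) * qE q ((ℓ:ℝ) + 1) := by
      simp only [qE]
      rw [show (N:ℝ) + 1 + 1 + ℓ = ((N:ℝ) + 1) + ((ℓ:ℝ) + 1) by ring, Real.rpow_add hq0]
      ring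
    have h4 : (q:ℝ) ^ (ℓ + (N + 1)) = q ^ ℓ * q ^ ((N:ℝ) + 1) := by
      rw [pow_add, ← Real.rpow_natCast q (N + 1)]
      push_cast
      ring
    rw [h2, h1, h3, h4]
    field_simp

lemma Wsum (x : ℝ) (hx : 0 < x) (N : ℕ) :
    ∑ m ∈ Finset.range (N + 1), q ^ m * qpoch q x m / qpoch q 1 m
      = qpoch q (x + 1) N / qpoch q 1 N := by
  induction N with
  | zero => simp [qpoch_zero]
  | succ N ih =>
    rw [Finset.sum_range_succ, ih]
    have h1 : qpoch q (x + 1) (N + 1) = qpoch q (x + 1) N * qE q (x + 1 + N) := qpoch_succ _ _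
    have h2 : qpoch q 1 (N + 1) = qpoch q 1 N * qE q (1 + N) := qpoch_succ _ _
    have h3 : qpoch q x (N + 1) = qE q x * qpoch q (x + 1) N := qpoch_succ' _ _
    have h4 : qE q (x + 1 + (N:ℝ)) = qE q (1 + (N:ℝ)) + q ^ (1 + (N:ℝ)) * qE q x := by
      simp only [qE]
      rw [show x + 1 + (N:ℝ) = (1 + (N:ℝ)) + x by ring, Real.rpow_add hq0]
      ring
    have h5 : (q:ℝ) ^ (N + 1) = q ^ (1 + (N:ℝ)) := by
      rw [← Real.rpow_natCast q (N + 1)]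
      push_cast
      ring_nf
    have hp1 : qpoch q 1 N ≠ 0 := qpoch_ne hq0 hq1 one_pos N
    have hE1 : qE q (1 + (N:ℝ)) ≠ 0 := qE_ne hq0 hq1 (by positivity)
    rw [h1, h2, h3, h4, h5]
    field_simp

lemma termV (ℓ m : ℕ) :
    qpoch q ((m:ℝ) + 1) ℓ * qDD q α (ℓ + m)
      = qpoch q (α + 2) ℓ * (qpoch q (α + 2 + (ℓ:ℝ)) m / qpoch q 1 m) := by
  have hA : qpoch q (α + 2) (ℓ + m) = qpoch q (α + 2) ℓ * qpoch q (α + 2 + ℓ) m :=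
    qpoch_add _ _ _
  have hB : qpoch q 1 (ℓ + m) = qpoch q 1 m * qpoch q (1 + m) ℓ := by
    rw [show ℓ + m = m + ℓ by omega]
    exact qpoch_add _ _ _
  have hC : qpoch q (1 + (m:ℝ)) ℓ = qpoch q ((m:ℝ) + 1) ℓ := by ring_nf
  have hp1 : qpoch q 1 m ≠ 0 := qpoch_ne hq0 hq1 one_pos m
  have hp2 : qpoch q ((m:ℝ) + 1) ℓ ≠ 0 := qpoch_ne hq0 hq1 (by positivity) ℓ
  rw [qDD, hA, hB, hC]
  field_simp

lemma Vsum (ℓ N : ℕ) :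
    ∑ m ∈ Finset.range (N + 1), q ^ (ℓ + m) * qpoch q ((m:ℝ) + 1) ℓ * qDD q α (ℓ + m)
      = q ^ ℓ * qpoch q (α + 2) ℓ * (qpoch q (α + 2 + (ℓ:ℝ) + 1) N / qpoch q 1 N) := by
  have hstep : ∀ m ∈ Finset.range (N + 1),
      q ^ (ℓ + m) * qpoch q ((m:ℝ) + 1) ℓ * qDD q α (ℓ + m)
        = q ^ ℓ * qpoch q (α + 2) ℓ * (q ^ m * qpoch q (α + 2 + (ℓ:ℝ)) m / qpoch q 1 m) := by
    intro m _
    rw [mul_assoc, termV hq0 hq1 hα, pow_add]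
    ring
  rw [Finset.sum_congr rfl hstep, ← Finset.mul_sum,
    Wsum hq0 hq1 hα (α + 2 + (ℓ:ℝ)) (by have := (Nat.cast_nonneg ℓ : (0:ℝ) ≤ ℓ); linarith) N]

lemma SumEq (ℓ N : ℕ) :
    ∑ k ∈ Finset.range (ℓ + 1 + N),
        qPochDesc q k ℓ * (q ^ ((k:ℝ) + α + 1) * gg q α (k + 1)) / qE q (α + 1)
      = (q ^ (α + 1) / qE q (α + 1)) *
          (q ^ ℓ * qpoch q ((N:ℝ) + 1) (ℓ + 1) / qE q ((ℓ:ℝ) + 1)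
            - qgamma q 1 (α + 1) *
              (q ^ ℓ * qpoch q (α + 2) ℓ * (qpoch q (α + 2 + (ℓ:ℝ) + 1) N / qpoch q 1 N))) := by
  rw [show ℓ + 1 + N = ℓ + (N + 1) by omega, Finset.sum_range_add]
  have hzero : ∀ k ∈ Finset.range ℓ,
      qPochDesc q k ℓ * (q ^ ((k:ℝ) + α + 1) * gg q α (k + 1)) / qE q (α + 1) = 0 := by
    intro k hk
    rw [qPochDesc_lt hq0 hq1 hα (Finset.mem_range.1 hk)]
    simp
  rw [Finset.sum_eq_zero hzero, zero_add]
  have hterm : ∀ m ∈ Finset.range (N + 1),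
      qPochDesc q (ℓ + m) ℓ * (q ^ ((((ℓ + m : ℕ)):ℝ) + α + 1) * gg q α (ℓ + m + 1)) / qE q (α + 1)
        = (q ^ (α + 1) / qE q (α + 1)) *
            (q ^ (ℓ + m) * qpoch q ((m:ℝ) + 1) ℓ
              - qgamma q 1 (α + 1) * (q ^ (ℓ + m) * qpoch q ((m:ℝ) + 1) ℓ * qDD q α (ℓ + m))) := by
    intro m _
    rw [qPochDesc_shift hq0 hq1 hα, hggD hq0 hq1 hα]
    have hpow : q ^ ((((ℓ + m : ℕ)):ℝ) + α + 1) = q ^ (α + 1) * q ^ (ℓ + m) := by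
      rw [← Real.rpow_natCast q (ℓ + m), ← Real.rpow_add hq0]
      congr 1
      push_cast
      ring
    rw [hpow]
    ring
  rw [Finset.sum_congr rfl hterm, ← Finset.mul_sum, Finset.sum_sub_distrib, ← Finset.mul_sum,
    Usum hq0 hq1 hα ℓ N, Vsum hq0 hq1 hα ℓ N]

lemma tendsto_qpoch {x : ℝ} (hx : 0 < x) :
    Filter.Tendsto (fun N : ℕ => qpoch q x N) Filter.atTop (nhds (qPochInf q (q ^ x))) := by
  have hm : Multipliable (fun k : ℕ => 1 - q ^ x * q ^ k) :=
    multipliable_fact hq0 hq1 (Real.rpow_nonneg hq0.le x) (rpow_lt_one' hq0 hq1 hα hx)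
  have h := HasProd.tendsto_prod_nat hm.hasProd
  rw [qPochInf]
  refine Filter.Tendsto.congr (fun N => ?_) h
  rw [qpoch]
  refine Finset.prod_congr rfl fun i _ => ?_
  rw [qE, Real.rpow_add hq0, Real.rpow_natCast]

lemma tendsto_window (ℓ : ℕ) :
    Filter.Tendsto (fun N : ℕ => qpoch q ((N:ℝ) + 1) (ℓ + 1)) Filter.atTop (nhds 1) := by
  have h : ∀ j : ℕ, Filter.Tendsto (fun N : ℕ => qE q ((N:ℝ) + 1 + j)) Filter.atTop (nhds 1) := by
    intro j
    have hqz : Filter.Tendsto (fun N : ℕ => q ^ ((N:ℝ) + 1 + j)) Filter.atTop (nhds 0) := by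
      have heq : ∀ N : ℕ, q ^ ((N:ℝ) + 1 + j) = q ^ (1 + (j:ℝ)) * q ^ N := by
        intro N
        rw [← Real.rpow_natCast q N, ← Real.rpow_add hq0]
        congr 1
        ring
      refine Filter.Tendsto.congr (fun N => (heq N).symm) ?_
      simpa using (tendsto_pow_atTop_nhds_zero_of_lt_one hq0.le hq1).const_mul (q ^ (1 + (j:ℝ)))
    have h2 := tendsto_const_nhds (α := ℕ) (x := (1:ℝ)) |>.sub hqz
    simp only [sub_zero] at h2
    simpa [qE] using h2
  have hprod := tendsto_finset_prod (Finset.range (ℓ + 1)) (fun j _ => h j)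
  simp only [Finset.prod_const_one] at hprod
  simpa [qpoch] using hprod

lemma Lval (ℓ : ℕ) :
    (q ^ (α + 1) / qE q (α + 1)) *
        (q ^ ℓ * 1 / qE q ((ℓ:ℝ) + 1)
          - qgamma q 1 (α + 1) *
            (q ^ ℓ * qpoch q (α + 2) ℓ *
              (qPochInf q (q ^ (α + 2 + (ℓ:ℝ) + 1)) / qPochInf q (q ^ (1:ℝ)))))
      = q ^ (2 * (ℓ:ℝ) + α + 2) / ((1 - q ^ ((ℓ:ℝ) + 1)) * (1 - q ^ ((ℓ:ℝ) + α + 2))) := by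
  have hcl : (0:ℝ) ≤ (ℓ:ℝ) := Nat.cast_nonneg ℓ
  have hγ : qgamma q 1 (α + 1) = qPochInf q (q ^ (1:ℝ)) / qPochInf q (q ^ (α + 2)) := by
    rw [qgamma, show (1:ℝ) + (α + 1) = α + 2 by ring]
  have hsh : qPochInf q (q ^ (α + 2))
      = qpoch q (α + 2) (ℓ + 1) * qPochInf q (q ^ (α + 2 + (((ℓ+1):ℕ):ℝ))) :=
    Pshiftn hq0 hq1 hα (by linarith) (ℓ + 1)
  have hcast : α + 2 + (((ℓ+1):ℕ):ℝ) = α + 2 + (ℓ:ℝ) + 1 := by push_cast; ring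
  rw [hcast] at hsh
  have hps : qpoch q (α + 2) (ℓ + 1) = qpoch q (α + 2) ℓ * qE q (α + 2 + ℓ) :=
    qpoch_succ _ _
  have hP1 : 0 < qPochInf q (q ^ (1:ℝ)) := Ppos hq0 hq1 hα one_pos
  have hP2 : 0 < qPochInf q (q ^ (α + 2 + (ℓ:ℝ) + 1)) := Ppos hq0 hq1 hα (by linarith)
  have hpoch : qpoch q (α + 2) ℓ ≠ 0 := qpoch_ne hq0 hq1 (by linarith) ℓ
  have hE2 : qE q (α + 2 + (ℓ:ℝ)) = 1 - q ^ ((ℓ:ℝ) + α + 2) := by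
    rw [qE, show α + 2 + (ℓ:ℝ) = (ℓ:ℝ) + α + 2 by ring]
  have hE2ne : (1:ℝ) - q ^ ((ℓ:ℝ) + α + 2) ≠ 0 := by
    have := qE_pos hq0 hq1 (show (0:ℝ) < (ℓ:ℝ) + α + 2 by linarith)
    rw [qE] at this; linarith
  have hE1ne : (1:ℝ) - q ^ ((ℓ:ℝ) + 1) ≠ 0 := by
    have := qE_pos hq0 hq1 (show (0:ℝ) < (ℓ:ℝ) + 1 by linarith)
    rw [qE] at this; linarith
  have hEαne : qE q (α + 1) ≠ 0 := qE_ne hq0 hq1 (by linarith)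
  have hElne : qE q ((ℓ:ℝ) + 1) = 1 - q ^ ((ℓ:ℝ) + 1) := by rw [qE]
  have hqpow : q ^ (α + 1) * (q:ℝ) ^ (ℓ:ℕ) * q ^ ((ℓ:ℝ) + 1) = q ^ (2 * (ℓ:ℝ) + α + 2) := by
    rw [← Real.rpow_natCast q ℓ, ← Real.rpow_add hq0, ← Real.rpow_add hq0]
    congr 1
    ring
  have hmul : q ^ (((ℓ:ℝ) + 1) + (α + 1)) = q ^ ((ℓ:ℝ) + 1) * q ^ (α + 1) :=
    Real.rpow_add hq0 _ _
  have hkey : q ^ ((ℓ:ℝ) + 1) - q ^ ((ℓ:ℝ) + α + 2) = q ^ ((ℓ:ℝ) + 1) * qE q (α + 1) := by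
    rw [qE, show (ℓ:ℝ) + α + 2 = ((ℓ:ℝ) + 1) + (α + 1) by ring]
    linear_combination -hmul
  have hterm : qgamma q 1 (α + 1) *
      (q ^ ℓ * qpoch q (α + 2) ℓ *
        (qPochInf q (q ^ (α + 2 + (ℓ:ℝ) + 1)) / qPochInf q (q ^ (1:ℝ))))
      = q ^ ℓ / (1 - q ^ ((ℓ:ℝ) + α + 2)) := by
    rw [hγ, hsh, hps, mul_div_assoc']
    rw [div_mul_div_comm]
    have hd1 : qpoch q (α + 2) ℓ * qE q (α + 2 + (ℓ:ℝ)) * qPochInf q (q ^ (α + 2 + (ℓ:ℝ) + 1))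
        * qPochInf q (q ^ (1:ℝ)) ≠ 0 := by
      refine mul_ne_zero (mul_ne_zero (mul_ne_zero hpoch ?_) hP2.ne') hP1.ne'
      rw [hE2]; exact hE2ne
    rw [div_eq_div_iff hd1 hE2ne, hE2]
    ring
  rw [hterm, hElne]
  rw [div_sub_div _ _ hE1ne hE2ne]
  rw [show q ^ ℓ * 1 * (1 - q ^ ((ℓ:ℝ) + α + 2)) - (1 - q ^ ((ℓ:ℝ) + 1)) * q ^ ℓ
      = (q:ℝ) ^ ℓ * (q ^ ((ℓ:ℝ) + 1) - q ^ ((ℓ:ℝ) + α + 2)) by ring]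
  rw [hkey, div_mul_div_comm]
  have hd1 : qE q (α + 1) * ((1 - q ^ ((ℓ:ℝ) + 1)) * (1 - q ^ ((ℓ:ℝ) + α + 2))) ≠ 0 :=
    mul_ne_zero hEαne (mul_ne_zero hE1ne hE2ne)
  have hd2 : ((1:ℝ) - q ^ ((ℓ:ℝ) + 1)) * (1 - q ^ ((ℓ:ℝ) + α + 2)) ≠ 0 :=
    mul_ne_zero hE1ne hE2ne
  rw [div_eq_div_iff hd1 hd2]
  linear_combination (qE q (α + 1) * ((1 - q ^ ((ℓ:ℝ) + 1)) * (1 - q ^ ((ℓ:ℝ) + α + 2)))) * hqpow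

lemma final_hasSum (ℓ : ℕ) :
    HasSum
      (fun k : ℕ => qPochDesc q k ℓ * (q ^ ((k:ℝ) + α + 1) * gg q α (k + 1)) / qE q (α + 1))
      (q ^ (2 * (ℓ:ℝ) + α + 2)
        / ((1 - q ^ ((ℓ:ℝ) + 1)) * (1 - q ^ ((ℓ:ℝ) + α + 2)))) := by
  have hnn : ∀ k : ℕ,
      0 ≤ qPochDesc q k ℓ * (q ^ ((k:ℝ) + α + 1) * gg q α (k + 1)) / qE q (α + 1) := by
    intro k
    have h1 := qPochDesc_nonneg hq0 hq1 hα ℓ k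
    have h2 : (0:ℝ) < q ^ ((k:ℝ) + α + 1) := Real.rpow_pos_of_pos hq0 _
    have h3 := gg_pos hq0 hq1 hα (k + 1)
    have h4 := qE_pos hq0 hq1 (show (0:ℝ) < α + 1 by linarith)
    positivity
  rw [hasSum_iff_tendsto_nat_of_nonneg hnn]
  rw [← Filter.tendsto_add_atTop_iff_nat (ℓ + 1)]
  have heq : ∀ n : ℕ,
      ∑ k ∈ Finset.range (n + (ℓ + 1)),
          qPochDesc q k ℓ * (q ^ ((k:ℝ) + α + 1) * gg q α (k + 1)) / qE q (α + 1)
        = (q ^ (α + 1) / qE q (α + 1)) *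
            (q ^ ℓ * qpoch q ((n:ℝ) + 1) (ℓ + 1) / qE q ((ℓ:ℝ) + 1)
              - qgamma q 1 (α + 1) *
                (q ^ ℓ * qpoch q (α + 2) ℓ
                  * (qpoch q (α + 2 + (ℓ:ℝ) + 1) n / qpoch q 1 n))) := by
    intro n
    rw [show n + (ℓ + 1) = ℓ + 1 + n by ring]
    exact SumEq hq0 hq1 hα ℓ n
  refine Filter.Tendsto.congr (fun n => (heq n).symm) ?_
  have h1 := tendsto_window hq0 hq1 hα ℓ
  have h2 := tendsto_qpoch hq0 hq1 hα
    (show (0:ℝ) < α + 2 + (ℓ:ℝ) + 1 by have := (Nat.cast_nonneg ℓ : (0:ℝ) ≤ ℓ); linarith)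
  have h3 := tendsto_qpoch hq0 hq1 hα one_pos
  have hP1ne : qPochInf q (q ^ (1:ℝ)) ≠ 0 := (Ppos hq0 hq1 hα one_pos).ne'
  have hdiv := h2.div h3 hP1ne
  have T := ((((h1.const_mul (q ^ ℓ)).div_const (qE q ((ℓ:ℝ) + 1))).sub
    (((hdiv.const_mul (q ^ ℓ * qpoch q (α + 2) ℓ))).const_mul
      (qgamma q 1 (α + 1)))).const_mul (q ^ (α + 1) / qE q (α + 1)))
  rw [Lval hq0 hq1 hα ℓ] at T
  exact T


end Chain
end QLagAux


/-- Lemma 6.13, equation (6.39): for every `ℓ ≥ 0` the series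
`Σ_{k=0}^∞ (q^k;q^{−1})_ℓ T̃_k/(λ̃_k π̃_k)` converges and equals
`q^{2ℓ+α+2}/((1−q^{ℓ+1})(1−q^{ℓ+α+2}))`. -/
theorem modified_qLaguerre_T_sum_infinite
    (q α : ℝ) (hq0 : 0 < q) (hq1 : q < 1) (hα : -1 < α) (ℓ : ℕ) :
    Summable (fun k : ℕ =>
      qPochDesc q k ℓ * TQL q α k / (lamQL q α k * piQL q α k)) ∧
    ∑' k : ℕ, qPochDesc q k ℓ * TQL q α k / (lamQL q α k * piQL q α k)
      = q ^ (2 * (ℓ : ℝ) + α + 2)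
          / ((1 - q ^ ((ℓ : ℝ) + 1)) * (1 - q ^ ((ℓ : ℝ) + α + 2))) := by
  have hfun : (fun k : ℕ => qPochDesc q k ℓ * TQL q α k / (lamQL q α k * piQL q α k))
      = fun k : ℕ => qPochDesc q k ℓ * (q ^ ((k:ℝ) + α + 1) * QLagAux.gg q α (k + 1))
          / QLagAux.qE q (α + 1) :=
    funext fun k => QLagAux.term_eq hq0 hq1 hα ℓ k
  have hs := QLagAux.final_hasSum hq0 hq1 hα ℓ
  rw [hfun]
  exact ⟨hs.summable, hs.tsum_eq⟩
end
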